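/- Let n ≥ 0 and let x : Fin n → ℝ satisfy x_t ≥ 0 for all t, ∑_{t′ < t} x_{t′} < 1 for every t, and ∑_{t} x_t ≤ 1. Define f_t = x_t / (1 − ∑_{t′ < t} x_{t′}). Then 0 ≤ f_t ≤ 1 for every t, and for every subset S ⊆ Fin n one has ∏_{t ∈ S} (1 − f_t) ≤ 1 − ∑_{t ∈ S} x_t. -/

import Mathlib

open Finset

/-- Feasibility verification in the proof of the Converse Jensen Inequality
(Appendix E, Equation (17)). -/
theorem converse_jensen_feasibility
    (n : ℕ) (x : Fin n → ℝ)
    (hx : ∀ t, 0 ≤ x t)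
    (hlt : ∀ t : Fin n, ∑ t' ∈ Iio t, x t' < 1)
    (hsum : ∑ t, x t ≤ 1)
    (f : Fin n → ℝ) (hf : ∀ t, f t = x t / (1 - ∑ t' ∈ Iio t, x t')) :
    (∀ t, 0 ≤ f t ∧ f t ≤ 1)
    ∧ ∀ S : Finset (Fin n), ∏ t ∈ S, (1 - f t) ≤ 1 - ∑ t ∈ S, x t := by
  have hR : ∀ t : Fin n, 0 < 1 - ∑ t' ∈ Iio t, x t' := fun t => by
    have := hlt t; linarith
  have hxle : ∀ t : Fin n, x t ≤ 1 - ∑ t' ∈ Iio t, x t' := by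
    intro t
    have hsub : insert t (Iio t) ⊆ univ := subset_univ _
    have h1 : ∑ t' ∈ insert t (Iio t), x t' ≤ ∑ t', x t' :=
      sum_le_sum_of_subset_of_nonneg hsub (fun i _ _ => hx i)
    rw [sum_insert (by simp)] at h1
    linarith
  have hbound : ∀ t, 0 ≤ f t ∧ f t ≤ 1 := by
    intro t
    rw [hf t]
    exact ⟨div_nonneg (hx t) (hR t).le, (div_le_one (hR t)).2 (hxle t)⟩
  refine ⟨hbound, ?_⟩
  intro S
  induction S using Finset.induction_on_max with
  | empty => simp
  | insert a s hmax ih =>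
    have has : a ∉ s := fun h => lt_irrefl a (hmax a h)
    rw [prod_insert has, sum_insert has]
    have hAsub : s ⊆ Iio a := fun i hi => mem_Iio.2 (hmax i hi)
    have hA : ∑ t ∈ s, x t ≤ ∑ t' ∈ Iio a, x t' :=
      sum_le_sum_of_subset_of_nonneg hAsub (fun i _ _ => hx i)
    have h1 : (1 - f a) * ∏ t ∈ s, (1 - f t) ≤ (1 - f a) * (1 - ∑ t ∈ s, x t) := by
      apply mul_le_mul_of_nonneg_left ih
      linarith [(hbound a).2]
    refine h1.trans ?_
    rw [hf a]
    have hRa := hR a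
    have hxa := hx a
    have key : x a * (1 - ∑ t' ∈ Iio a, x t') ≤ x a * (1 - ∑ t ∈ s, x t) :=
      mul_le_mul_of_nonneg_left (by linarith) hxa
    have hdiv : x a ≤ (x a / (1 - ∑ t' ∈ Iio a, x t')) * (1 - ∑ t ∈ s, x t) := by
      rw [div_mul_eq_mul_div, le_div_iff₀ hRa]
      linarith
    nlinarith [hdiv]
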